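/- arXiv:1912.00924 — 3 statements merged into one kernel-verified Lean document; each statement's English description precedes it below -/
import Mathlib

section
/- Let G be a second countable Hausdorff locally compact abelian group with character group H, and let μ be a probability measure on ℝ × G such that for every c ∈ ℝ the function (t,g) ↦ exp(c·t) is μ-integrable. For h ∈ H define F_h(s) = ∫ exp(i s t)·h(g) dμ(t,g) for s ∈ ℂ (the integral converges absolutely for every s ∈ ℂ). Then: (a) for every h ∈ H, F_h is an entire function of s; (b) F_h(s) coincides with the characteristic function μ̂(s,h) for real s; and (c) for every r ≥ 0 and every h ∈ H, max_{|s| ≤ r} |F_h(s)| ≤ max_{|s| ≤ r} |F_0(s)|, where F_0 corresponds to the trivial character h = 0 of G. -/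
open MeasureTheory Complex

noncomputable section

/-- The Pontryagin dual of an additive topological abelian group `G`:
continuous characters `G → Circle`, written multiplicatively via `Multiplicative G`. -/
abbrev DualGroup (G : Type*) [AddCommGroup G] [TopologicalSpace G] : Type _ :=
  PontryaginDual (Multiplicative G)

/-- The analytic continuation `F_h(s) = ∫ exp(i s t)·h(g) dμ(t,g)` of the characteristic
function of a measure `μ` on `ℝ × G`, for a character `h` of `G` and complex `s`. -/
def Fext {G : Type*} [AddCommGroup G] [TopologicalSpace G] [MeasurableSpace G]
    (μ : Measure (ℝ × G)) (h : DualGroup G) (s : ℂ) : ℂ :=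
  ∫ p, Complex.exp (Complex.I * s * p.1) * (h (Multiplicative.ofAdd p.2) : ℂ) ∂μ

/-- The characteristic function of a measure `μ` on `ℝ × G` at the character `(s, h)`. -/
def charFunRG {G : Type*} [AddCommGroup G] [TopologicalSpace G] [MeasurableSpace G]
    (μ : Measure (ℝ × G)) (s : ℝ) (h : DualGroup G) : ℂ :=
  ∫ p, Complex.exp (Complex.I * s * p.1) * (h (Multiplicative.ofAdd p.2) : ℂ) ∂μ

/-! ### Auxiliary lemmas -/

lemma exp_abs_le' (x : ℝ) : Real.exp |x| ≤ Real.exp x + Real.exp (-x) := by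
  rcases abs_cases x with ⟨h, _⟩ | ⟨h, _⟩ <;> rw [h]
  · linarith [Real.exp_pos (-x)]
  · linarith [Real.exp_pos x]

lemma norm_integrand (s : ℂ) (t : ℝ) (z : Circle) :
    ‖Complex.exp (Complex.I * s * t) * (z : ℂ)‖ = Real.exp (-s.im * t) := by
  simp [Complex.norm_exp, Complex.mul_re, Complex.mul_im, Circle.norm_coe]

lemma norm_deriv_integrand (s : ℂ) (t : ℝ) (z : Circle) :
    ‖Complex.I * (t : ℂ) * Complex.exp (Complex.I * s * t) * (z : ℂ)‖
      = |t| * Real.exp (-s.im * t) := by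
  simp [Complex.norm_exp, Complex.mul_re, Complex.mul_im, abs_mul, Circle.norm_coe]

lemma hasDerivAt_integrand (t : ℝ) (c : ℂ) (s : ℂ) :
    HasDerivAt (fun s : ℂ => Complex.exp (Complex.I * s * t) * c)
      (Complex.I * t * Complex.exp (Complex.I * s * t) * c) s := by
  have h1 : HasDerivAt (fun s : ℂ => Complex.I * s * t) (Complex.I * t) s := by
    simpa using ((hasDerivAt_id s).const_mul (Complex.I : ℂ)).mul_const (t : ℂ)
  have := (h1.cexp).mul_const c
  exact this.congr_deriv (by ring)

section Gaux
set_option linter.unusedSectionVars false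
variable {G : Type*} [AddCommGroup G] [TopologicalSpace G] [IsTopologicalAddGroup G]
    [MeasurableSpace G] [BorelSpace G] [SecondCountableTopology G]

lemma cont_integrand (h : DualGroup G) (s : ℂ) :
    Continuous fun p : ℝ × G =>
      Complex.exp (Complex.I * s * p.1) * (h (Multiplicative.ofAdd p.2) : ℂ) :=
  (Complex.continuous_exp.comp (continuous_const.mul
    (Complex.continuous_ofReal.comp continuous_fst))).mul
    (continuous_subtype_val.comp (h.continuous.comp continuous_snd))

lemma cont_deriv_integrand (h : DualGroup G) (s : ℂ) :
    Continuous fun p : ℝ × G =>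
      Complex.I * p.1 * Complex.exp (Complex.I * s * p.1) *
        (h (Multiplicative.ofAdd p.2) : ℂ) :=
  (((continuous_const.mul (Complex.continuous_ofReal.comp continuous_fst)).mul
    (Complex.continuous_exp.comp (continuous_const.mul
      (Complex.continuous_ofReal.comp continuous_fst)))).mul
    (continuous_subtype_val.comp (h.continuous.comp continuous_snd)))

lemma integrable_integrand (μ : Measure (ℝ × G))
    (hint : ∀ c : ℝ, Integrable (fun p : ℝ × G => Real.exp (c * p.1)) μ)
    (h : DualGroup G) (s : ℂ) :
    Integrable (fun p : ℝ × G =>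
      Complex.exp (Complex.I * s * p.1) * (h (Multiplicative.ofAdd p.2) : ℂ)) μ := by
  refine (hint (-s.im)).mono' (cont_integrand h s).aestronglyMeasurable ?_
  filter_upwards with p
  rw [norm_integrand]

lemma norm_Fext_le (μ : Measure (ℝ × G)) (h : DualGroup G) (s : ℂ) :
    ‖Fext μ h s‖ ≤ ∫ p : ℝ × G, Real.exp (-s.im * p.1) ∂μ := by
  refine (norm_integral_le_integral_norm _).trans_eq ?_
  congr 1
  ext p
  exact norm_integrand s p.1 _

lemma differentiable_Fext (μ : Measure (ℝ × G))
    (hint : ∀ c : ℝ, Integrable (fun p : ℝ × G => Real.exp (c * p.1)) μ)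
    (h : DualGroup G) : Differentiable ℂ (Fext μ h) := by
  intro s₀
  set c : ℝ := |s₀.im| + 1 with hc
  have key := hasDerivAt_integral_of_dominated_loc_of_deriv_le (𝕜 := ℂ) (μ := μ)
    (F := fun s p => Complex.exp (Complex.I * s * p.1) * (h (Multiplicative.ofAdd p.2) : ℂ))
    (F' := fun s p => Complex.I * p.1 * Complex.exp (Complex.I * s * p.1) *
      (h (Multiplicative.ofAdd p.2) : ℂ))
    (bound := fun p => Real.exp ((c + 1) * p.1) + Real.exp (-(c + 1) * p.1))
    (Metric.ball_mem_nhds s₀ one_pos)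
    (.of_forall fun s => (cont_integrand h s).aestronglyMeasurable)
    (integrable_integrand μ hint h s₀)
    (cont_deriv_integrand h s₀).aestronglyMeasurable
    ?_ ((hint (c + 1)).add (hint (-(c + 1)))) ?_
  · exact key.2.differentiableAt
  · filter_upwards with p s hs
    rw [norm_deriv_integrand]
    set t := p.1 with ht
    have him : |s.im| ≤ c := by
      have h2 : |s.im - s₀.im| < 1 := by
        have h3 : |(s - s₀).im| ≤ ‖s - s₀‖ := Complex.abs_im_le_norm _
        have h4 : dist s s₀ < 1 := Metric.mem_ball.mp hs
        rw [Complex.dist_eq] at h4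
        simpa using h3.trans_lt h4
      have := abs_sub_abs_le_abs_sub s.im s₀.im
      simp only [hc]
      linarith
    calc |t| * Real.exp (-s.im * t)
        ≤ Real.exp |t| * Real.exp (c * |t|) := by
          apply mul_le_mul ?_ ?_ (Real.exp_pos _).le (Real.exp_pos _).le
          · exact (le_add_of_nonneg_right zero_le_one).trans (Real.add_one_le_exp _)
          · apply Real.exp_le_exp.mpr
            calc -s.im * t ≤ |(-s.im) * t| := le_abs_self _
              _ = |s.im| * |t| := by rw [abs_mul, abs_neg]
              _ ≤ c * |t| := mul_le_mul_of_nonneg_right him (abs_nonneg t)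
      _ = Real.exp ((c + 1) * |t|) := by rw [← Real.exp_add]; congr 1; ring
      _ = Real.exp |(c + 1) * t| := by
          congr 1
          rw [abs_mul, _root_.abs_of_nonneg (by positivity : (0:ℝ) ≤ c + 1)]
      _ ≤ Real.exp ((c + 1) * t) + Real.exp (-((c + 1) * t)) := exp_abs_le' _
      _ = Real.exp ((c + 1) * t) + Real.exp (-(c + 1) * t) := by congr 1; ring
  · filter_upwards with p s _
    exact hasDerivAt_integrand p.1 _ s

lemma Fext_one_eval (μ : Measure (ℝ × G)) (y : ℝ) :
    Fext μ (1 : DualGroup G) ((y : ℂ) * Complex.I)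
      = ((∫ p : ℝ × G, Real.exp (-y * p.1) ∂μ : ℝ) : ℂ) := by
  have key : ∀ p : ℝ × G,
      Complex.exp (Complex.I * ((y : ℂ) * Complex.I) * (p.1 : ℂ)) *
        ((1 : DualGroup G) (Multiplicative.ofAdd p.2) : ℂ) = ((Real.exp (-y * p.1) : ℝ) : ℂ) := by
    intro p
    have harg : Complex.I * ((y : ℂ) * Complex.I) * (p.1 : ℂ) = ((-y * p.1 : ℝ) : ℂ) := by
      push_cast
      ring_nf
      rw [Complex.I_sq]
      ring
    have h1 : ((1 : DualGroup G) (Multiplicative.ofAdd p.2) : ℂ) = 1 := rfl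
    rw [harg, h1, mul_one, ← Complex.ofReal_exp]
  rw [Fext]
  simp_rw [key]
  exact integral_ofReal

end Gaux

theorem entire_extension_of_charFun_and_max_modulus_bound
    {G : Type*} [AddCommGroup G] [TopologicalSpace G] [IsTopologicalAddGroup G]
    [LocallyCompactSpace G] [SecondCountableTopology G] [T2Space G]
    [MeasurableSpace G] [BorelSpace G]
    (μ : Measure (ℝ × G)) [IsProbabilityMeasure μ]
    (hint : ∀ c : ℝ, Integrable (fun p : ℝ × G => Real.exp (c * p.1)) μ) :
    -- (a) each `F_h` is an entire function
    (∀ h : DualGroup G, Differentiable ℂ (Fext μ h)) ∧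
    -- (b) `F_h` agrees with the characteristic function for real `s`
    (∀ (s : ℝ) (h : DualGroup G), Fext μ h (s : ℂ) = charFunRG μ s h) ∧
    -- (c) the maximum-modulus bound on closed discs
    (∀ r : ℝ, 0 ≤ r → ∀ h : DualGroup G,
      sSup ((fun s => ‖Fext μ h s‖) '' Metric.closedBall (0 : ℂ) r) ≤
        sSup ((fun s => ‖Fext μ (1 : DualGroup G) s‖) ''
          Metric.closedBall (0 : ℂ) r)) := by
  refine ⟨differentiable_Fext μ hint, fun s h => rfl, fun r hr h => ?_⟩
  -- key pointwise bound: |F_h s| ≤ |F_1 (s.im • I)|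
  have hnonneg : ∀ y : ℝ, 0 ≤ ∫ p : ℝ × G, Real.exp (-y * p.1) ∂μ := fun y =>
    integral_nonneg fun p => (Real.exp_pos _).le
  have hkey : ∀ s : ℂ, ‖Fext μ h s‖
      ≤ ‖Fext μ (1 : DualGroup G) ((s.im : ℂ) * Complex.I)‖ := by
    intro s
    rw [Fext_one_eval μ s.im, Complex.norm_of_nonneg (hnonneg s.im)]
    exact norm_Fext_le μ h s
  have hmem : ∀ s : ℂ, s ∈ Metric.closedBall (0 : ℂ) r →
      (s.im : ℂ) * Complex.I ∈ Metric.closedBall (0 : ℂ) r := by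
    intro s hs
    rw [Metric.mem_closedBall, dist_zero_right] at hs ⊢
    calc ‖(s.im : ℂ) * Complex.I‖ = |s.im| := by simp
      _ ≤ ‖s‖ := Complex.abs_im_le_norm s
      _ ≤ r := hs
  -- boundedness of the right-hand image
  have hbdd : BddAbove ((fun s => ‖Fext μ (1 : DualGroup G) s‖) ''
      Metric.closedBall (0 : ℂ) r) := by
    refine ⟨∫ p : ℝ × G, (Real.exp (r * p.1) + Real.exp (-r * p.1)) ∂μ, ?_⟩
    rintro y ⟨s, hs, rfl⟩
    rw [Metric.mem_closedBall, dist_zero_right] at hs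
    show ‖Fext μ (1 : DualGroup G) s‖ ≤ _
    refine (norm_Fext_le μ _ s).trans ?_
    refine integral_mono (hint (-s.im)) ((hint r).add (hint (-r))) fun p => ?_
    calc Real.exp (-s.im * p.1) ≤ Real.exp |r * p.1| := by
          apply Real.exp_le_exp.mpr
          calc -s.im * p.1 ≤ |(-s.im) * p.1| := le_abs_self _
            _ = |s.im| * |p.1| := by rw [abs_mul, abs_neg]
            _ ≤ r * |p.1| := by
                refine mul_le_mul_of_nonneg_right ?_ (abs_nonneg _)
                exact (Complex.abs_im_le_norm s).trans hs
            _ = |r * p.1| := by rw [abs_mul, _root_.abs_of_nonneg hr]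
      _ ≤ Real.exp (r * p.1) + Real.exp (-(r * p.1)) := exp_abs_le' _
      _ = Real.exp (r * p.1) + Real.exp (-r * p.1) := by congr 1; ring
  -- conclude
  have hne : ((fun s => ‖Fext μ h s‖) '' Metric.closedBall (0 : ℂ) r).Nonempty :=
    (Metric.nonempty_closedBall.mpr hr).image _
  refine csSup_le hne ?_
  rintro y ⟨s, hs, rfl⟩
  exact (hkey s).trans (le_csSup hbdd ⟨_, hmem s hs, rfl⟩)

end
end

section
/- Let G be a second countable Hausdorff locally compact abelian group with character group H, and let μ be a probability measure on ℝ × G such that for every c ∈ ℝ the function (t,g) ↦ exp(c·t) is μ-integrable. For h ∈ H and s ∈ ℂ put F_h(s) = ∫ exp(i s t)·h(g) dμ(t,g). Then for every y ∈ ℝ there exists a probability measure ν on ℝ × G such that ν̂(x,h) = F_h(x − i y)/F_0(−i y) for all x ∈ ℝ and all h ∈ H, where F_0 corresponds to the trivial character of G (note F_0(−iy) = ∫ exp(y·t) dμ(t,g) > 0). -/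
open MeasureTheory Complex

noncomputable section

theorem exists_tilted_probability_measure_with_shifted_charFun
    {G : Type*} [AddCommGroup G] [TopologicalSpace G] [IsTopologicalAddGroup G]
    [LocallyCompactSpace G] [SecondCountableTopology G] [T2Space G]
    [MeasurableSpace G] [BorelSpace G]
    (μ : Measure (ℝ × G)) [IsProbabilityMeasure μ]
    (hint : ∀ c : ℝ, Integrable (fun p : ℝ × G => Real.exp (c * p.1)) μ) :
    ∀ y : ℝ, ∃ ν : Measure (ℝ × G), IsProbabilityMeasure ν ∧
      ∀ (x : ℝ) (h : DualGroup G),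
        charFunRG ν x h =
          Fext μ h ((x : ℂ) - Complex.I * (y : ℂ)) /
            Fext μ (1 : DualGroup G) (-(Complex.I * (y : ℂ))) := by
  intro y
  refine ⟨μ.tilted (fun p => y * p.1), isProbabilityMeasure_tilted (hint y), ?_⟩
  intro x h
  set Z : ℝ := ∫ p : ℝ × G, Real.exp (y * p.1) ∂μ with hZdef
  have key : ∀ p : ℝ × G,
      Complex.exp (Complex.I * ((x : ℂ) - Complex.I * (y : ℂ)) * (p.1 : ℂ))
        = (Real.exp (y * p.1) : ℂ) * Complex.exp (Complex.I * (x : ℂ) * (p.1 : ℂ)) := by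
    intro p
    rw [Complex.ofReal_exp, ← Complex.exp_add]
    congr 1
    push_cast
    linear_combination (-((y : ℂ) * (p.1 : ℂ))) * Complex.I_sq
  have hZ : Fext μ (1 : DualGroup G) (-(Complex.I * (y : ℂ))) = (Z : ℂ) := by
    rw [Fext, hZdef]
    calc ∫ p : ℝ × G, Complex.exp (Complex.I * (-(Complex.I * (y : ℂ))) * (p.1 : ℂ))
            * ((1 : DualGroup G) (Multiplicative.ofAdd p.2) : ℂ) ∂μ
        = ∫ p : ℝ × G, ((Real.exp (y * p.1) : ℝ) : ℂ) ∂μ := by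
          congr 1
          funext p
          have h1 : (((1 : DualGroup G) (Multiplicative.ofAdd p.2) : Circle) : ℂ) = 1 := rfl
          rw [h1, mul_one, Complex.ofReal_exp]
          congr 1
          push_cast
          linear_combination (-((y : ℂ) * (p.1 : ℂ))) * Complex.I_sq
      _ = ((∫ p : ℝ × G, Real.exp (y * p.1) ∂μ : ℝ) : ℂ) := integral_ofReal
  rw [charFunRG, hZ, Fext]
  calc ∫ p, Complex.exp (Complex.I * (x : ℂ) * (p.1 : ℂ))
          * ((h (Multiplicative.ofAdd p.2) : ℂ)) ∂(μ.tilted (fun p => y * p.1))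
      = ∫ p : ℝ × G, (Complex.exp (Complex.I * ((x : ℂ) - Complex.I * (y : ℂ)) * (p.1 : ℂ))
          * (h (Multiplicative.ofAdd p.2) : ℂ)) / (Z : ℂ) ∂μ := by
        rw [integral_tilted]
        congr 1
        funext p
        rw [key p, Complex.real_smul]
        push_cast
        ring
    _ = (∫ p : ℝ × G, Complex.exp (Complex.I * ((x : ℂ) - Complex.I * (y : ℂ)) * (p.1 : ℂ))
          * (h (Multiplicative.ofAdd p.2) : ℂ) ∂μ) / (Z : ℂ) := integral_div _ _

end
end

section
/- Let G be an additive subgroup of ℚ, let y₀ ∈ ℚ, and let f : ℚ → ℝ be a function such that Δ_h³ f(y) = 0 for every h ∈ G and every y ∈ y₀ + G, where Δ_h f(y) = f(y+h) − f(y). Then there exist real numbers A, B, C such that f(y) = A·y² + B·y + C for all y ∈ y₀ + G. -/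
lemma int_quad (u : ℤ → ℝ)
    (hrec : ∀ n : ℤ, u (n+3) = 3*u (n+2) - 3*u (n+1) + u n) :
    ∀ n : ℤ, u n = u 0 + (n:ℝ) * (u 1 - u 0) + ((n:ℝ)*((n:ℝ)-1)/2) * (u 2 - 2*u 1 + u 0) := by
  set P : ℤ → Prop := fun n =>
    u n = u 0 + (n:ℝ) * (u 1 - u 0) + ((n:ℝ)*((n:ℝ)-1)/2) * (u 2 - 2*u 1 + u 0) with hP
  have main : ∀ n : ℤ, P n ∧ P (n+1) ∧ P (n+2) := by
    intro n
    induction n using Int.induction_on with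
    | zero =>
      refine ⟨?_, ?_, ?_⟩ <;> simp only [hP] <;> push_cast <;> ring
    | succ k ih =>
      obtain ⟨h0, h1, h2⟩ := ih
      refine ⟨h1, ?_, ?_⟩
      · rw [show ((k:ℤ)+1+1) = ((k:ℤ)+2) by ring]; exact h2
      · rw [show ((k:ℤ)+1+2) = ((k:ℤ)+3) by ring]
        have hr := hrec k
        simp only [hP] at h0 h1 h2 ⊢
        rw [hr]
        push_cast at h0 h1 h2 ⊢
        linear_combination 3*h2 - 3*h1 + h0
    | pred k ih =>
      obtain ⟨h0, h1, h2⟩ := ih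
      refine ⟨?_, ?_, ?_⟩
      · have hr := hrec (-(k:ℤ)-1)
        rw [show (-(k:ℤ)-1+3) = (-(k:ℤ)+2) by ring, show (-(k:ℤ)-1+2) = (-(k:ℤ)+1) by ring,
          show (-(k:ℤ)-1+1) = (-(k:ℤ)) by ring] at hr
        simp only [hP] at h0 h1 h2 ⊢
        push_cast at h0 h1 h2 ⊢
        linear_combination h2 - 3*h1 + 3*h0 - hr
      · rw [show (-(k:ℤ)-1+1) = (-(k:ℤ)) by ring]; exact h0
      · rw [show (-(k:ℤ)-1+2) = (-(k:ℤ)+1) by ring]; exact h1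
  exact fun n => (main n).1

lemma quad_eq {A₁ B₁ C₁ A₂ B₂ C₂ s : ℝ} (hs : s ≠ 0)
    (h0 : C₁ = C₂)
    (h1 : A₁*s^2 + B₁*s + C₁ = A₂*s^2 + B₂*s + C₂)
    (h2 : A₁*(2*s)^2 + B₁*(2*s) + C₁ = A₂*(2*s)^2 + B₂*(2*s) + C₂)
    (t : ℝ) : A₁*t^2 + B₁*t + C₁ = A₂*t^2 + B₂*t + C₂ := by
  have hs2 : s^2 ≠ 0 := pow_ne_zero _ hs
  have hA : A₁ = A₂ := by
    have h : (A₁ - A₂) * s^2 = 0 := by linear_combination (h2 - 2*h1 + h0)/2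
    have := (mul_eq_zero.1 h).resolve_right hs2
    linarith
  have hB : B₁ = B₂ := by
    have h : (B₁ - B₂) * s = 0 := by linear_combination h1 - h0 - s^2*hA
    have := (mul_eq_zero.1 h).resolve_right hs
    linarith
  linear_combination t^2*hA + t*hB + h0


/-- The finite difference operator `Δ_h f(y) = f(y+h) − f(y)`. -/
def fdiff (h : ℚ) (f : ℚ → ℝ) : ℚ → ℝ :=
  fun y => f (y + h) - f y

theorem quadratic_on_coset_of_third_difference_vanishing
    (G : AddSubgroup ℚ) (y₀ : ℚ) (f : ℚ → ℝ)
    (hf : ∀ h ∈ G, ∀ g ∈ G, fdiff h (fdiff h (fdiff h f)) (y₀ + g) = 0) :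
    ∃ A B C : ℝ, ∀ g ∈ G,
      f (y₀ + g) = A * ((y₀ + g : ℚ) : ℝ) ^ 2 + B * ((y₀ + g : ℚ) : ℝ) + C := by
  -- Key: for every step d ∈ G, f is a quadratic sequence along y₀ + ℤ·d.
  have key : ∀ d ∈ G, ∀ n : ℤ, f (y₀ + (n:ℚ)*d) =
      f y₀ + (n:ℝ) * (f (y₀+d) - f y₀)
        + ((n:ℝ)*((n:ℝ)-1)/2) * (f (y₀+2*d) - 2*f (y₀+d) + f y₀) := by
    intro d hd
    have H := int_quad (fun n : ℤ => f (y₀ + (n:ℚ)*d)) ?_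
    · intro n
      have h := H n
      rw [h]
      norm_num
    · intro n
      have hmem : ((n:ℚ)*d) ∈ G := by
        have := AddSubgroup.zsmul_mem G hd n
        rwa [zsmul_eq_mul] at this
      have h := hf d hd ((n:ℚ)*d) hmem
      simp only [fdiff] at h
      rw [show (y₀ + ((n:ℤ)+3 : ℤ)*d : ℚ) = y₀ + (n:ℚ)*d + d + d + d by push_cast; ring,
        show (y₀ + ((n:ℤ)+2 : ℤ)*d : ℚ) = y₀ + (n:ℚ)*d + d + d by push_cast; ring,
        show (y₀ + ((n:ℤ)+1 : ℤ)*d : ℚ) = y₀ + (n:ℚ)*d + d by push_cast; ring]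
      linarith
  by_cases hG : ∀ g ∈ G, g = (0:ℚ)
  · refine ⟨0, 0, f y₀, fun g hg => ?_⟩
    rw [hG g hg]
    norm_num
  · push_neg at hG
    obtain ⟨a, haG, ha0⟩ := hG
    have ha0' : ((a:ℚ):ℝ) ≠ 0 := by exact_mod_cast ha0
    obtain ⟨A, hA⟩ : ∃ A : ℝ, A = (f (y₀+2*a) - 2*f (y₀+a) + f y₀) / (2 * ((a:ℚ):ℝ)^2) := ⟨_, rfl⟩
    obtain ⟨B, hB⟩ : ∃ B : ℝ, B = (f (y₀+a) - f y₀) / ((a:ℚ):ℝ) - A * ((a:ℚ):ℝ) := ⟨_, rfl⟩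
    -- f(y₀ + n·a) = A (na)² + B (na) + f y₀ for all n ∈ ℤ
    have step1 : ∀ n : ℤ, f (y₀ + (n:ℚ)*a) =
        A * ((n:ℝ)*((a:ℚ):ℝ))^2 + B * ((n:ℝ)*((a:ℚ):ℝ)) + f y₀ := by
      intro n
      rw [key a haG n, hB, hA]
      field_simp
      ring
    refine ⟨A, B - 2*A*((y₀:ℚ):ℝ), A*((y₀:ℚ):ℝ)^2 - B*((y₀:ℚ):ℝ) + f y₀, fun g hg => ?_⟩
    -- find common step d with a = m·d, g = n·d
    obtain ⟨d, hdG, m, n, hmd, hnd, hm0, hd0⟩ :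
        ∃ d ∈ G, ∃ m n : ℤ, a = (m:ℚ)*d ∧ g = (n:ℚ)*d ∧ m ≠ 0 ∧ d ≠ 0 := by
      set p : ℤ := a.num * (g.den : ℤ) with hp
      set r : ℤ := g.num * (a.den : ℤ) with hr
      set N : ℤ := (a.den : ℤ) * (g.den : ℤ) with hNdef
      have hN0 : (N:ℚ) ≠ 0 := by
        simp [hNdef, Rat.den_ne_zero]
      have haN : a = (p:ℚ)/(N:ℚ) := by
        rw [hp, hNdef]
        push_cast
        rw [mul_div_mul_right _ _ (by exact_mod_cast g.den_nz : ((g.den:ℚ) ≠ 0))]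
        exact (Rat.num_div_den a).symm
      have hgN : g = (r:ℚ)/(N:ℚ) := by
        rw [hr, hNdef]
        push_cast
        rw [mul_comm ((a.den : ℚ)) ((g.den : ℚ)), mul_div_mul_right _ _
          (by exact_mod_cast a.den_nz : ((a.den:ℚ) ≠ 0))]
        exact (Rat.num_div_den g).symm
      set k : ℤ := (Int.gcd p r : ℤ) with hk
      have hp0 : p ≠ 0 := by
        rw [hp]
        exact mul_ne_zero (Rat.num_ne_zero.2 ha0) (by exact_mod_cast g.den_nz)
      have hk0 : k ≠ 0 := by
        rw [hk]
        intro h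
        exact hp0 (Int.gcd_eq_zero_iff.1 (by exact_mod_cast h)).1
      refine ⟨(k:ℚ)/(N:ℚ), ?_, p / k, r / k, ?_, ?_, ?_, ?_⟩
      · have hbez : (k:ℚ)/(N:ℚ) = (Int.gcdA p r : ℚ) * a + (Int.gcdB p r : ℚ) * g := by
          rw [haN, hgN, hk]
          rw [show ((Int.gcd p r : ℤ) : ℚ) = ((p * Int.gcdA p r + r * Int.gcdB p r : ℤ) : ℚ) by
            exact_mod_cast congrArg (fun z : ℤ => (z : ℚ)) (Int.gcd_eq_gcd_ab p r)]
          push_cast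
          field_simp
        rw [hbez]
        refine G.add_mem ?_ ?_
        · simpa [zsmul_eq_mul] using G.zsmul_mem haG (Int.gcdA p r)
        · simpa [zsmul_eq_mul] using G.zsmul_mem hg (Int.gcdB p r)
      · have hdvd : k ∣ p := by rw [hk]; exact Int.gcd_dvd_left p r
        have hpk : ((p / k : ℤ) : ℚ) * (k:ℚ) = (p:ℚ) := by
          exact_mod_cast Int.ediv_mul_cancel hdvd
        rw [haN, ← mul_div_assoc, hpk]
      · have hdvd : k ∣ r := by rw [hk]; exact Int.gcd_dvd_right p r
        have hrk : ((r / k : ℤ) : ℚ) * (k:ℚ) = (r:ℚ) := by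
          exact_mod_cast Int.ediv_mul_cancel hdvd
        rw [hgN, ← mul_div_assoc, hrk]
      · intro h
        apply hp0
        have hdvd : k ∣ p := by rw [hk]; exact Int.gcd_dvd_left p r
        have := Int.ediv_mul_cancel hdvd
        rw [h] at this
        simpa using this.symm
      · exact div_ne_zero (by exact_mod_cast hk0) hN0
    -- inner claim : f (y₀ + n·d) = A (nd)² + B (nd) + f y₀
    have inner : f (y₀ + (n:ℚ)*d) =
        A * ((n:ℝ)*((d:ℚ):ℝ))^2 + B * ((n:ℝ)*((d:ℚ):ℝ)) + f y₀ := by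
      have hm0' : ((m:ℤ):ℝ) ≠ 0 := by exact_mod_cast hm0
      obtain ⟨α, hα⟩ : ∃ x : ℝ, x = (f (y₀+2*d) - 2*f (y₀+d) + f y₀)/2 := ⟨_, rfl⟩
      obtain ⟨β, hβ⟩ : ∃ x : ℝ, x = (f (y₀+d) - f y₀) - α := ⟨_, rfl⟩
      have keyd : ∀ k : ℤ, f (y₀ + (k:ℚ)*d) = α*(k:ℝ)^2 + β*(k:ℝ) + f y₀ := by
        intro k
        rw [key d hdG k, hβ, hα]; ring
      -- both quadratics (in the integer variable) agree at 0, m, 2m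
      have hda : ((d:ℚ):ℝ) * ((m:ℤ):ℝ) = ((a:ℚ):ℝ) := by
        rw [hmd]; push_cast; ring
      have e1 : α*((m:ℝ))^2 + β*((m:ℝ)) + f y₀
          = (A*((d:ℚ):ℝ)^2)*((m:ℝ))^2 + (B*((d:ℚ):ℝ))*((m:ℝ)) + f y₀ := by
        have k1 := keyd m
        have s1 := step1 1
        rw [show ((1:ℤ):ℚ) = (1:ℚ) by norm_num] at s1
        rw [show (y₀ + (m:ℚ)*d : ℚ) = y₀ + (1:ℚ)*a by rw [hmd]; ring] at k1
        rw [s1] at k1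
        push_cast at k1 ⊢
        linear_combination -k1 - (A*((d:ℚ):ℝ)*((m:ℤ):ℝ) + A*((a:ℚ):ℝ) + B) * hda
      have e2 : α*(2*(m:ℝ))^2 + β*(2*(m:ℝ)) + f y₀
          = (A*((d:ℚ):ℝ)^2)*(2*(m:ℝ))^2 + (B*((d:ℚ):ℝ))*(2*(m:ℝ)) + f y₀ := by
        have k1 := keyd (2*m)
        have s1 := step1 2
        rw [show (y₀ + ((2*m:ℤ):ℚ)*d : ℚ) = y₀ + ((2:ℤ):ℚ)*a by rw [hmd]; push_cast; ring] at k1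
        rw [s1] at k1
        push_cast at k1 ⊢
        linear_combination -k1 - (4*A*((d:ℚ):ℝ)*((m:ℤ):ℝ) + 4*A*((a:ℚ):ℝ) + 2*B) * hda
      have := quad_eq (A₁ := α) (B₁ := β) (C₁ := f y₀)
        (A₂ := A*((d:ℚ):ℝ)^2) (B₂ := B*((d:ℚ):ℝ)) (C₂ := f y₀) (s := (m:ℝ))
        hm0' rfl e1 e2 (n:ℝ)
      rw [keyd n, this]; ring
    rw [show (y₀ + g : ℚ) = y₀ + (n:ℚ)*d by rw [hnd], inner]
    push_cast
    ring
end
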